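/- Let p be a prime with p ≡ 1 (mod 3), and let a ∈ ℤ_p^× be a unit whose reduction modulo p is not a cube in 𝔽_p^×. Then the cubic surface X ⊂ ℙ³_{ℚ_p} defined by T₀³ + p·T₁³ + p²·T₂³ − a·T₃³ = 0 has no ℚ_p-rational point. -/

import Mathlib

section aux
variable {p : ℕ} [hp : Fact p.Prime]

lemma pdvd_of_toZMod_eq_zero {x : ℤ_[p]} (h : PadicInt.toZMod x = 0) : (p : ℤ_[p]) ∣ x := by
  rw [← Ideal.mem_span_singleton, ← PadicInt.maximalIdeal_eq_span_p, ← PadicInt.ker_toZMod]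
  exact h

lemma toZMod_eq_zero_of_pdvd {x : ℤ_[p]} (h : (p : ℤ_[p]) ∣ x) : PadicInt.toZMod x = 0 := by
  rw [← RingHom.mem_ker, PadicInt.ker_toZMod, PadicInt.maximalIdeal_eq_span_p,
    Ideal.mem_span_singleton]
  exact h

lemma key_step (a : ℤ_[p])
    (hcube : ¬ ∃ t : ZMod p, t ^ 3 = PadicInt.toZMod a)
    (x y z w : ℤ_[p])
    (h : x ^ 3 + (p : ℤ_[p]) * y ^ 3 + (p : ℤ_[p]) ^ 2 * z ^ 3 = a * w ^ 3) :
    (p : ℤ_[p]) ∣ x ∧ (p : ℤ_[p]) ∣ y ∧ (p : ℤ_[p]) ∣ z ∧ (p : ℤ_[p]) ∣ w := by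
  set φ := (PadicInt.toZMod : ℤ_[p] →+* ZMod p) with hφ
  have hpQ : (p : ℤ_[p]) ≠ 0 := by
    exact_mod_cast Nat.cast_ne_zero.mpr hp.1.ne_zero
  have hφp : φ (p : ℤ_[p]) = 0 := by simp [hφ]
  -- reduce mod p
  have h1 : φ x ^ 3 = φ a * φ w ^ 3 := by
    have := congrArg φ h
    simpa [map_add, map_mul, map_pow, hφp] using this
  have hw : φ w = 0 := by
    by_contra hw0
    apply hcube
    refine ⟨φ x * (φ w)⁻¹, ?_⟩
    field_simp [mul_pow, h1]
    linear_combination h1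
  have hx : φ x = 0 := by
    have : φ x ^ 3 = 0 := by rw [h1, hw]; ring
    exact pow_eq_zero_iff (by norm_num) |>.mp this
  obtain ⟨x1, hx1⟩ := pdvd_of_toZMod_eq_zero hx
  obtain ⟨w1, hw1⟩ := pdvd_of_toZMod_eq_zero hw
  refine ⟨⟨x1, hx1⟩, ?_, ?_, ⟨w1, hw1⟩⟩
  · -- derive y divisible
    have h2 : (p : ℤ_[p]) ^ 2 * x1 ^ 3 + y ^ 3 + (p : ℤ_[p]) * z ^ 3
        = a * ((p : ℤ_[p]) ^ 2 * w1 ^ 3) := by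
      apply mul_left_cancel₀ hpQ
      rw [hx1, hw1] at h
      linear_combination h
    have hy : φ y = 0 := by
      have := congrArg φ h2
      have h3 : φ y ^ 3 = 0 := by
        simpa [map_add, map_mul, map_pow, hφp] using this
      exact pow_eq_zero_iff (by norm_num) |>.mp h3
    exact pdvd_of_toZMod_eq_zero hy
  · have h2 : (p : ℤ_[p]) ^ 2 * x1 ^ 3 + y ^ 3 + (p : ℤ_[p]) * z ^ 3
        = a * ((p : ℤ_[p]) ^ 2 * w1 ^ 3) := by
      apply mul_left_cancel₀ hpQ
      rw [hx1, hw1] at h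
      linear_combination h
    have hy : φ y = 0 := by
      have := congrArg φ h2
      have h3 : φ y ^ 3 = 0 := by
        simpa [map_add, map_mul, map_pow, hφp] using this
      exact pow_eq_zero_iff (by norm_num) |>.mp h3
    obtain ⟨y1, hy1⟩ := pdvd_of_toZMod_eq_zero hy
    have h3 : (p : ℤ_[p]) * x1 ^ 3 + (p : ℤ_[p]) ^ 2 * y1 ^ 3 + z ^ 3
        = a * ((p : ℤ_[p]) * w1 ^ 3) := by
      apply mul_left_cancel₀ hpQ
      rw [hy1] at h2
      linear_combination h2
    have hz : φ z = 0 := by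
      have := congrArg φ h3
      have h4 : φ z ^ 3 = 0 := by
        simpa [map_add, map_mul, map_pow, hφp] using this
      exact pow_eq_zero_iff (by norm_num) |>.mp h4
    exact pdvd_of_toZMod_eq_zero hz

lemma descent (a : ℤ_[p])
    (hcube : ¬ ∃ t : ZMod p, t ^ 3 = PadicInt.toZMod a) :
    ∀ (n : ℕ) (x y z w : ℤ_[p]),
      x ^ 3 + (p : ℤ_[p]) * y ^ 3 + (p : ℤ_[p]) ^ 2 * z ^ 3 = a * w ^ 3 →
      (p : ℤ_[p]) ^ n ∣ x ∧ (p : ℤ_[p]) ^ n ∣ y ∧ (p : ℤ_[p]) ^ n ∣ z ∧ (p : ℤ_[p]) ^ n ∣ w := by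
  intro n
  induction n with
  | zero => intro x y z w _; simp
  | succ n ih =>
    intro x y z w h
    have hpQ : (p : ℤ_[p]) ≠ 0 := by exact_mod_cast Nat.cast_ne_zero.mpr hp.1.ne_zero
    obtain ⟨⟨x1, hx1⟩, ⟨y1, hy1⟩, ⟨z1, hz1⟩, ⟨w1, hw1⟩⟩ := key_step a hcube x y z w h
    have h' : x1 ^ 3 + (p : ℤ_[p]) * y1 ^ 3 + (p : ℤ_[p]) ^ 2 * z1 ^ 3 = a * w1 ^ 3 := by
      apply mul_left_cancel₀ (pow_ne_zero 3 hpQ)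
      rw [hx1, hy1, hz1, hw1] at h
      linear_combination h
    obtain ⟨d1, d2, d3, d4⟩ := ih x1 y1 z1 w1 h'
    refine ⟨?_, ?_, ?_, ?_⟩
    · rw [hx1, pow_succ, mul_comm ((p:ℤ_[p])^n)]; exact mul_dvd_mul_left _ d1
    · rw [hy1, pow_succ, mul_comm ((p:ℤ_[p])^n)]; exact mul_dvd_mul_left _ d2
    · rw [hz1, pow_succ, mul_comm ((p:ℤ_[p])^n)]; exact mul_dvd_mul_left _ d3
    · rw [hw1, pow_succ, mul_comm ((p:ℤ_[p])^n)]; exact mul_dvd_mul_left _ d4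

lemma zero_of_all_pow_dvd {x : ℤ_[p]} (h : ∀ n : ℕ, (p : ℤ_[p]) ^ n ∣ x) : x = 0 := by
  by_contra hx
  have hnorm : 0 < ‖x‖ := norm_pos_iff.mpr hx
  obtain ⟨k, hk⟩ := PadicInt.exists_pow_neg_lt p hnorm
  have : ‖x‖ ≤ (p : ℝ) ^ (-(k : ℤ)) := by
    rw [PadicInt.norm_le_pow_iff_mem_span_pow]
    exact Ideal.mem_span_singleton.mpr (h k)
  linarith

end aux

/-- Let `p` be a prime with `p ≡ 1 (mod 3)`, and let `a ∈ ℤ_p^×` be a unit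
whose reduction modulo `p` is not a cube in `𝔽_p`.  Then the cubic surface
`T₀³ + p T₁³ + p² T₂³ − a T₃³ = 0` in `ℙ³` over `ℚ_p` has no `ℚ_p`-rational point,
i.e. the equation has no nonzero solution `(T₀,T₁,T₂,T₃) ∈ ℚ_p⁴`. -/
theorem stmt1 (p : ℕ) [Fact p.Prime] (hp3 : p % 3 = 1)
    (a : ℤ_[p]) (ha : IsUnit a)
    (hcube : ¬ ∃ t : ZMod p, t ^ 3 = PadicInt.toZMod a) :
    ∀ T : Fin 4 → ℚ_[p],
      (T 0) ^ 3 + (p : ℚ_[p]) * (T 1) ^ 3 + (p : ℚ_[p]) ^ 2 * (T 2) ^ 3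
        - (a : ℚ_[p]) * (T 3) ^ 3 = 0 → T = 0 := by
  intro T hT
  have hp := (Fact.out : p.Prime)
  have hpR : (1:ℝ) < (p:ℝ) := by exact_mod_cast hp.one_lt
  have hpQ : (p : ℚ_[p]) ≠ 0 := Nat.cast_ne_zero.mpr hp.ne_zero
  -- find a common k making everything integral
  have hscale : ∀ x : ℚ_[p], ∃ k : ℕ, ∀ K : ℕ, k ≤ K → ‖(p : ℚ_[p]) ^ K * x‖ ≤ 1 := by
    intro x
    by_cases hx : x = 0
    · exact ⟨0, fun K _ => by simp [hx]⟩
    · refine ⟨(-x.valuation).toNat, fun K hK => ?_⟩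
      rw [norm_mul, Padic.norm_p_pow, Padic.norm_eq_zpow_neg_valuation hx, ← zpow_add₀ (by positivity)]
      refine zpow_le_one_of_nonpos₀ (le_of_lt hpR) ?_
      have : -x.valuation ≤ (K : ℤ) := le_trans (Int.self_le_toNat _) (by exact_mod_cast hK)
      omega
  obtain ⟨k0, hk0⟩ := hscale (T 0)
  obtain ⟨k1, hk1⟩ := hscale (T 1)
  obtain ⟨k2, hk2⟩ := hscale (T 2)
  obtain ⟨k3, hk3⟩ := hscale (T 3)
  set K := max (max k0 k1) (max k2 k3) with hK
  set x : ℤ_[p] := ⟨(p : ℚ_[p]) ^ K * T 0, hk0 K (by omega)⟩ with hxdef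
  set y : ℤ_[p] := ⟨(p : ℚ_[p]) ^ K * T 1, hk1 K (by omega)⟩ with hydef
  set z : ℤ_[p] := ⟨(p : ℚ_[p]) ^ K * T 2, hk2 K (by omega)⟩ with hzdef
  set w : ℤ_[p] := ⟨(p : ℚ_[p]) ^ K * T 3, hk3 K (by omega)⟩ with hwdef
  have heq : x ^ 3 + (p : ℤ_[p]) * y ^ 3 + (p : ℤ_[p]) ^ 2 * z ^ 3 = a * w ^ 3 := by
    apply Subtype.ext
    push_cast [hxdef, hydef, hzdef, hwdef, PadicInt.coe_pow]
    erw [PadicInt.coe_pow, PadicInt.coe_pow, PadicInt.coe_pow, PadicInt.coe_pow]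
    linear_combination ((p : ℚ_[p]) ^ K) ^ 3 * hT
  have hall := fun n => descent a hcube n x y z w heq
  have hx0 : x = 0 := zero_of_all_pow_dvd fun n => (hall n).1
  have hy0 : y = 0 := zero_of_all_pow_dvd fun n => (hall n).2.1
  have hz0 : z = 0 := zero_of_all_pow_dvd fun n => (hall n).2.2.1
  have hw0 : w = 0 := zero_of_all_pow_dvd fun n => (hall n).2.2.2
  have hpK : (p : ℚ_[p]) ^ K ≠ 0 := pow_ne_zero _ hpQ
  funext i
  fin_cases i
  · have := congrArg (Subtype.val) hx0
    simp only [hxdef] at this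
    exact (mul_eq_zero.mp this).resolve_left hpK
  · have := congrArg (Subtype.val) hy0
    simp only [hydef] at this
    exact (mul_eq_zero.mp this).resolve_left hpK
  · have := congrArg (Subtype.val) hz0
    simp only [hzdef] at this
    exact (mul_eq_zero.mp this).resolve_left hpK
  · have := congrArg (Subtype.val) hw0
    simp only [hwdef] at this
    exact (mul_eq_zero.mp this).resolve_left hpK
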